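/- Let k be a field and let u ∈ Matrix (Fin s) (Fin s) (Matrix (Fin n) (Fin n) k) satisfy (★). Then û := (u⁻¹)ᵀ also satisfies (★): û is invertible, ûᵀ is invertible, and (ûᵀ)⁻¹ = (û⁻¹)ᵀ, where now the outer transpose acts on the s×s indices of û. (Lemma 2.1 (ii).) -/

import Mathlib

open Matrix TensorProduct


private lemma ring_inv_inv {M : Type*} [MonoidWithZero M] {a : M} (h : IsUnit a) :
    Ring.inverse (Ring.inverse a) = a := by
  obtain ⟨v, rfl⟩ := h
  simp [Ring.inverse_unit]

/-- Lemma 2.1 (ii): if `u` satisfies `(★)`, then `û := (u⁻¹)ᵀ` also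
satisfies `(★)`. -/
theorem stmt9 {k : Type*} [Field k] {s n : ℕ}
    (u : Matrix (Fin s) (Fin s) (Matrix (Fin n) (Fin n) k))
    (hu : IsUnit u ∧ IsUnit uᵀ ∧ Ring.inverse uᵀ = (Ring.inverse u)ᵀ)
    (uhat : Matrix (Fin s) (Fin s) (Matrix (Fin n) (Fin n) k))
    (huhat : uhat = (Ring.inverse u)ᵀ) :
    IsUnit uhat ∧ IsUnit uhatᵀ ∧ Ring.inverse uhatᵀ = (Ring.inverse uhat)ᵀ := by
  obtain ⟨h1, h2, h3⟩ := hu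
  have huhat' : uhat = Ring.inverse uᵀ := by rw [huhat, h3]
  have hA : IsUnit uhat := by
    rw [huhat']
    exact isUnit_ringInverse.mpr h2
  have hB : uhatᵀ = Ring.inverse u := by rw [huhat, transpose_transpose]
  have hC : IsUnit uhatᵀ := by
    rw [hB]
    exact isUnit_ringInverse.mpr h1
  refine ⟨hA, hC, ?_⟩
  rw [hB, ring_inv_inv h1, huhat', ring_inv_inv h2,
    transpose_transpose]
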